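/- If G is a graph with an odd number of vertices, then mp(G) ≤ ξ(G) + 1, where ξ(G) = min over edges uv of (deg(u) + deg(v) − 2) is the minimum edge-degree of G (assuming G has at least one edge). -/
import Mathlib


open SimpleGraph

/-- An almost-perfect matching: a matching covering all vertices except exactly one. -/
def SimpleGraph.Subgraph.IsAlmostPerfectMatching {V : Type*} {G : SimpleGraph V}
    (M : G.Subgraph) : Prop :=
  M.IsMatching ∧ ∃ v : V, M.verts = {v}ᶜ

/-- `G` has a perfect matching or an almost-perfect matching. -/
def SimpleGraph.HasGoodMatching {V : Type*} (G : SimpleGraph V) : Prop :=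
  (∃ M : G.Subgraph, M.IsPerfectMatching) ∨ (∃ M : G.Subgraph, M.IsAlmostPerfectMatching)

/-- The matching preclusion number of `G`. -/
noncomputable def SimpleGraph.mp {V : Type*} [Fintype V] (G : SimpleGraph V) : ℕ :=
  sInf { k | ∃ F : Finset (Sym2 V), ↑F ⊆ G.edgeSet ∧ F.card = k ∧
    ¬ (G.deleteEdges ↑F).HasGoodMatching }

theorem stmt3 {V : Type*} [Fintype V] (G : SimpleGraph V) [DecidableRel G.Adj]
    (hodd : Odd (Fintype.card V)) (hne : ∃ u v, G.Adj u v) :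
    G.mp ≤ sInf { k | ∃ u v, G.Adj u v ∧ k = G.degree u + G.degree v - 2 } + 1 := by
  classical
  obtain ⟨u₀, v₀, h₀⟩ := hne
  have hSne : (Set.Nonempty { k | ∃ u v, G.Adj u v ∧ k = G.degree u + G.degree v - 2 }) :=
    ⟨_, u₀, v₀, h₀, rfl⟩
  obtain ⟨u, v, hadj, hk⟩ := Nat.sInf_mem hSne
  set k₀ := sInf { k | ∃ u v, G.Adj u v ∧ k = G.degree u + G.degree v - 2 } with hk₀
  set F : Finset (Sym2 V) := G.incidenceFinset u ∪ G.incidenceFinset v with hF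
  -- membership facts
  have hmemu : ∀ x, G.Adj u x → s(u, x) ∈ F := by
    intro x hx
    exact Finset.mem_union_left _ ((G.mem_incidenceFinset (v := u) (s(u, x)) |>.2)
      (G.mk'_mem_incidenceSet_left_iff.2 hx))
  have hmemv : ∀ x, G.Adj v x → s(v, x) ∈ F := by
    intro x hx
    exact Finset.mem_union_right _ ((G.mem_incidenceFinset (v := v) (s(v, x)) |>.2)
      (G.mk'_mem_incidenceSet_left_iff.2 hx))
  -- isolated vertices in the deleted graph
  have hiso : ∀ x, ¬ (G.deleteEdges (↑F)).Adj u x ∧ ¬ (G.deleteEdges (↑F)).Adj v x := by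
    intro x
    constructor
    · rw [deleteEdges_adj]
      rintro ⟨hGx, hmem⟩
      exact hmem (hmemu x hGx)
    · rw [deleteEdges_adj]
      rintro ⟨hGx, hmem⟩
      exact hmem (hmemv x hGx)
  -- cardinality of F
  have hinter : G.incidenceFinset u ∩ G.incidenceFinset v = {s(u, v)} := by
    ext e
    simp only [Finset.mem_inter, mem_incidenceFinset, Finset.mem_singleton]
    rw [← Set.mem_inter_iff, G.incidenceSet_inter_incidenceSet_of_adj hadj,
      Set.mem_singleton_iff]
  have hcard : F.card = k₀ + 1 := by
    have h1 : F.card + (G.incidenceFinset u ∩ G.incidenceFinset v).card =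
        (G.incidenceFinset u).card + (G.incidenceFinset v).card :=
      Finset.card_union_add_card_inter _ _
    rw [hinter, Finset.card_singleton, G.card_incidenceFinset_eq_degree,
      G.card_incidenceFinset_eq_degree] at h1
    have hdu : 1 ≤ G.degree u := by
      rw [← G.card_incidenceFinset_eq_degree]
      exact Finset.card_pos.2 ⟨s(u, v), (G.mem_incidenceFinset (v := u) (s(u, v)) |>.2)
        (G.mk'_mem_incidenceSet_left_iff.2 hadj)⟩
    have hdv : 1 ≤ G.degree v := by
      rw [← G.card_incidenceFinset_eq_degree]
      exact Finset.card_pos.2 ⟨s(v, u), (G.mem_incidenceFinset (v := v) (s(v, u)) |>.2)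
        (G.mk'_mem_incidenceSet_left_iff.2 hadj.symm)⟩
    omega
  -- F consists of edges
  have hsub : (↑F : Set (Sym2 V)) ⊆ G.edgeSet := by
    intro e he
    rw [Finset.coe_union, Set.mem_union, Finset.mem_coe, Finset.mem_coe,
      mem_incidenceFinset, mem_incidenceFinset] at he
    rcases he with he | he
    · exact he.1
    · exact he.1
  -- no good matching after deletion
  have hbad : ¬ (G.deleteEdges (↑F)).HasGoodMatching := by
    rintro (⟨M, hM⟩ | ⟨M, hMm, w, hw⟩)
    · exact (Nat.not_even_iff_odd.2 hodd) hM.even_card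
    · have hne' : u ≠ v := hadj.ne
      have : u ∈ M.verts ∨ v ∈ M.verts := by
        rw [hw]
        by_cases hu : u = w
        · right; simp [Set.mem_compl_iff, hu ▸ hne'.symm]
        · left; simp [Set.mem_compl_iff, hu]
      rcases this with hu | hv
      · obtain ⟨x, hx, -⟩ := hMm hu
        exact (hiso x).1 (M.adj_sub hx)
      · obtain ⟨x, hx, -⟩ := hMm hv
        exact (hiso x).2 (M.adj_sub hx)
  exact Nat.sInf_le ⟨F, hsub, hcard, hbad⟩
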